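/- Let B : V × V → W be a symmetric bilinear map on a 2-dimensional real inner product space V satisfying ⟨B(X,Z), B(Y,Z)⟩ = C·⟨X,Y⟩·⟨Z,Z⟩ for all X,Y,Z with C > 0. Then the trace of B vanishes: for any orthonormal basis (e₁, e₂) of V, B(e₁,e₁) + B(e₂,e₂) = 0. -/
import Mathlib


open scoped RealInnerProductSpace

/-- A symmetric bilinear map on a 2-dimensional real inner product space satisfying the
conformality identity with `C > 0` has vanishing trace: for any orthonormal basis
`(e₁, e₂)`, `B e₁ e₁ + B e₂ e₂ = 0`. -/
theorem stmt4 {V W : Type*} [NormedAddCommGroup V] [InnerProductSpace ℝ V]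
    [NormedAddCommGroup W] [InnerProductSpace ℝ W] [FiniteDimensional ℝ V]
    (hdim : Module.finrank ℝ V = 2) (C : ℝ) (hC : 0 < C)
    (B : V →ₗ[ℝ] V →ₗ[ℝ] W) (hsymm : ∀ X Y : V, B X Y = B Y X)
    (hB : ∀ X Y Z : V, ⟪B X Z, B Y Z⟫ = C * ⟪X, Y⟫ * ⟪Z, Z⟫) :
    ∀ e₁ e₂ : V, ‖e₁‖ = 1 → ‖e₂‖ = 1 → ⟪e₁, e₂⟫ = 0 →
      B e₁ e₁ + B e₂ e₂ = 0 := by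
  intro e₁ e₂ h1 h2 h12
  have he1 : ⟪e₁, e₁⟫ = 1 := by
    rw [real_inner_self_eq_norm_sq, h1]; norm_num
  have he2 : ⟪e₂, e₂⟫ = 1 := by
    rw [real_inner_self_eq_norm_sq, h2]; norm_num
  have h11 : ⟪B e₁ e₁, B e₁ e₁⟫ = C := by rw [hB, he1]; ring
  have h22 : ⟪B e₂ e₂, B e₂ e₂⟫ = C := by rw [hB, he2]; ring
  have hmix : ⟪B e₁ e₂, B e₁ e₂⟫ = C := by rw [hB, he1, he2]; ring
  have hcross : ⟪B e₁ (e₁ + e₂), B e₂ (e₁ + e₂)⟫ = 0 := by rw [hB, h12]; ring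
  have hc0 : ⟪B e₁ e₁, B e₂ e₂⟫ = -C := by
    have := hcross
    simp only [map_add, LinearMap.add_apply, inner_add_left, inner_add_right] at this
    rw [hsymm e₂ e₁] at this
    have hs : ⟪B e₁ e₁, B e₁ e₂⟫ = 0 := by
      have h := hB e₁ e₂ e₁
      rw [h12, hsymm e₂ e₁] at h
      rw [h]; ring
    have hs2 : ⟪B e₁ e₂, B e₂ e₂⟫ = 0 := by
      have h := hB e₁ e₂ e₂
      rw [h12] at h
      rw [h]; ring
    rw [hs, hs2, hmix] at this
    linarith
  have key : ⟪B e₁ e₁ + B e₂ e₂, B e₁ e₁ + B e₂ e₂⟫ = 0 := by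
    simp only [inner_add_left, inner_add_right]
    have hcomm := real_inner_comm (B e₁ e₁) (B e₂ e₂)
    linarith
  exact inner_self_eq_zero.mp key
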